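/- Let Σ_{i,j} q_{ij} X^i ⊗ Y^j ∈ k[X] ⊗ k[Y] with q_{ij} = 0 whenever i ≤ 1 or j ≤ 1. Then there is a unique twisting map s: k[Y] ⊗ k[X] → k[X] ⊗ k[Y] with s(Y ⊗ X) = Σ_{ij} q_{ij} X^i ⊗ Y^j, and moreover s(Y^r ⊗ X^s) = 0 whenever r, s > 0 and r + s > 2. -/

import Mathlib

open TensorProduct Polynomial LinearMap


/-- A twisting map `s : B ⊗ A → A ⊗ B`: it is compatible with the units and
with the multiplications of `A` and `B` (stated on pure tensors, which
suffices by linearity). -/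
structure IsTwistingMap (k A B : Type*) [CommRing k] [Ring A] [Ring B]
    [Algebra k A] [Algebra k B] (s : B ⊗[k] A →ₗ[k] A ⊗[k] B) : Prop where
  unit_left : ∀ a : A, s (1 ⊗ₜ a) = a ⊗ₜ 1
  unit_right : ∀ b : B, s (b ⊗ₜ 1) = 1 ⊗ₜ b
  mul_compat_B : ∀ (b b' : B) (a : A),
    s ((b * b') ⊗ₜ a) =
      (LinearMap.lTensor A (LinearMap.mul' k B))
        ((TensorProduct.assoc k A B B)
          ((LinearMap.rTensor B s)
            ((TensorProduct.assoc k B A B).symm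
              ((LinearMap.lTensor B s)
                ((TensorProduct.assoc k B B A) ((b ⊗ₜ b') ⊗ₜ a))))))
  mul_compat_A : ∀ (b : B) (a a' : A),
    s (b ⊗ₜ (a * a')) =
      (LinearMap.rTensor B (LinearMap.mul' k A))
        ((TensorProduct.assoc k A A B).symm
          ((LinearMap.lTensor A s)
            ((TensorProduct.assoc k A B A)
              ((LinearMap.rTensor A s)
                ((TensorProduct.assoc k B A A).symm (b ⊗ₜ (a ⊗ₜ a')))))))

set_option synthInstance.maxHeartbeats 1000000
set_option maxHeartbeats 1000000

namespace Stmt13Aux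

variable {k : Type*} [CommRing k]

noncomputable def bm : Module.Basis ℕ k (Polynomial k) := Polynomial.basisMonomials k

lemma bm_apply (i : ℕ) : (bm (k := k)) i = X ^ i := by
  simp [bm, Polynomial.coe_basisMonomials, Polynomial.X_pow_eq_monomial]

noncomputable def b2 : Module.Basis (ℕ × ℕ) k (Polynomial k ⊗[k] Polynomial k) :=
  Module.Basis.tensorProduct bm bm

lemma b2_apply (p : ℕ × ℕ) : (b2 (k := k)) p = (X ^ p.1) ⊗ₜ[k] (X ^ p.2) := by
  simp [b2, Module.Basis.tensorProduct_apply', bm_apply]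

lemma helperA (t : Polynomial k ⊗[k] Polynomial k) (y : Polynomial k) :
    lTensor (Polynomial k) (mul' k (Polynomial k))
      ((TensorProduct.assoc k (Polynomial k) (Polynomial k) (Polynomial k)) (t ⊗ₜ y))
      = lTensor (Polynomial k) (mulRight k y) t := by
  induction t with
  | zero => simp only [zero_tmul, LinearEquiv.map_zero, map_zero]
  | tmul u v => simp
  | add x y hx hy => simp only [add_tmul, LinearEquiv.map_add, map_add, hx, hy]

lemma helperB (x : Polynomial k) (t : Polynomial k ⊗[k] Polynomial k) :
    rTensor (Polynomial k) (mul' k (Polynomial k))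
      ((TensorProduct.assoc k (Polynomial k) (Polynomial k) (Polynomial k)).symm (x ⊗ₜ t))
      = rTensor (Polynomial k) (mulLeft k x) t := by
  induction t with
  | zero => simp only [tmul_zero, LinearEquiv.map_zero, map_zero]
  | tmul u v => simp
  | add a b ha hb => simp only [tmul_add, LinearEquiv.map_add, map_add, ha, hb]


noncomputable def psiMap (s₀ : Polynomial k ⊗[k] Polynomial k →ₗ[k] Polynomial k ⊗[k] Polynomial k)
    (z : Polynomial k) :
    Polynomial k ⊗[k] Polynomial k →ₗ[k] Polynomial k ⊗[k] Polynomial k :=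
  (rTensor (Polynomial k) (mul' k (Polynomial k))) ∘ₗ
    ((TensorProduct.assoc k (Polynomial k) (Polynomial k) (Polynomial k)).symm.toLinearMap) ∘ₗ
    (lTensor (Polynomial k) s₀) ∘ₗ
    ((TensorProduct.assoc k (Polynomial k) (Polynomial k) (Polynomial k)).toLinearMap) ∘ₗ
    ((TensorProduct.mk k (Polynomial k ⊗[k] Polynomial k) (Polynomial k)).flip z)

lemma psiMap_tmul (s₀ : Polynomial k ⊗[k] Polynomial k →ₗ[k] Polynomial k ⊗[k] Polynomial k)
    (z x y : Polynomial k) :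
    psiMap s₀ z (x ⊗ₜ y) = rTensor (Polynomial k) (mulLeft k x) (s₀ (y ⊗ₜ z)) := by
  simp only [psiMap, LinearMap.comp_apply, LinearMap.flip_apply, TensorProduct.mk_apply,
    LinearEquiv.coe_coe, TensorProduct.assoc_tmul, lTensor_tmul]
  exact helperB x (s₀ (y ⊗ₜ z))

noncomputable def thetaMap (s₀ : Polynomial k ⊗[k] Polynomial k →ₗ[k] Polynomial k ⊗[k] Polynomial k)
    (z : Polynomial k) :
    Polynomial k ⊗[k] Polynomial k →ₗ[k] Polynomial k ⊗[k] Polynomial k :=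
  (lTensor (Polynomial k) (mul' k (Polynomial k))) ∘ₗ
    ((TensorProduct.assoc k (Polynomial k) (Polynomial k) (Polynomial k)).toLinearMap) ∘ₗ
    (rTensor (Polynomial k) s₀) ∘ₗ
    ((TensorProduct.assoc k (Polynomial k) (Polynomial k) (Polynomial k)).symm.toLinearMap) ∘ₗ
    (TensorProduct.mk k (Polynomial k) (Polynomial k ⊗[k] Polynomial k) z)

lemma thetaMap_tmul (s₀ : Polynomial k ⊗[k] Polynomial k →ₗ[k] Polynomial k ⊗[k] Polynomial k)
    (z x y : Polynomial k) :
    thetaMap s₀ z (x ⊗ₜ y) = lTensor (Polynomial k) (mulRight k y) (s₀ (z ⊗ₜ x)) := by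
  simp only [thetaMap, LinearMap.comp_apply, TensorProduct.mk_apply, LinearEquiv.coe_coe,
    TensorProduct.assoc_symm_tmul, rTensor_tmul]
  exact helperA (s₀ (z ⊗ₜ x)) y

lemma mem_span_univ (t : Polynomial k ⊗[k] Polynomial k) :
    t ∈ Submodule.span k ((b2 (k := k)) '' Set.univ) := by
  rw [Set.image_univ, Module.Basis.span_eq]; trivial

lemma map_mem_span {f : Polynomial k ⊗[k] Polynomial k →ₗ[k] Polynomial k ⊗[k] Polynomial k}
    {S T' : Set (ℕ × ℕ)}
    (h : ∀ p ∈ S, f (b2 p) ∈ Submodule.span k ((b2 (k := k)) '' T'))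
    {t : Polynomial k ⊗[k] Polynomial k} (ht : t ∈ Submodule.span k ((b2 (k := k)) '' S)) :
    f t ∈ Submodule.span k ((b2 (k := k)) '' T') := by
  induction ht using Submodule.span_induction with
  | mem x hx => obtain ⟨p, hp, rfl⟩ := hx; exact h p hp
  | zero => simp
  | add x y _ _ hx hy => rw [map_add]; exact Submodule.add_mem _ hx hy
  | smul c x _ hx => rw [map_smul]; exact Submodule.smul_mem _ _ hx

lemma pow_mem_span {S : Set (ℕ × ℕ)} {i j : ℕ} (h : (i, j) ∈ S) :
    (X ^ i : Polynomial k) ⊗ₜ[k] (X ^ j : Polynomial k) ∈ Submodule.span k ((b2 (k := k)) '' S) :=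
  Submodule.subset_span ⟨(i, j), h, (b2_apply _)⟩

lemma eq_zero_of_mem_all {t : Polynomial k ⊗[k] Polynomial k}
    (h : ∀ N : ℕ, t ∈ Submodule.span k ((b2 (k := k)) '' {p | N ≤ p.1 + p.2})) : t = 0 := by
  have hr : (b2 (k := k)).repr t = 0 := by
    ext p
    have h1 := (Module.Basis.mem_span_image (b2 (k := k))).1 (h (p.1 + p.2 + 1))
    by_contra hne
    have hp : p ∈ ((b2 (k := k)).repr t).support := Finsupp.mem_support_iff.2 hne
    have := h1 hp
    simp only [Set.mem_setOf_eq] at this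
    omega
  exact (LinearEquiv.map_eq_zero_iff _).1 hr


variable (n : ℕ) (q : ℕ → ℕ → k)

noncomputable def TT : Polynomial k ⊗[k] Polynomial k :=
  ∑ i ∈ Finset.range n, ∑ j ∈ Finset.range n,
    q i j • (((X : Polynomial k) ^ i) ⊗ₜ[k] ((X : Polynomial k) ^ j))

noncomputable def val (r m : ℕ) : Polynomial k ⊗[k] Polynomial k :=
  if r = 0 then ((X : Polynomial k) ^ m) ⊗ₜ 1
  else if m = 0 then 1 ⊗ₜ ((X : Polynomial k) ^ r)
  else if r = 1 ∧ m = 1 then TT n q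
  else 0

lemma val_r0 (r : ℕ) : val n q r 0 = (1 : Polynomial k) ⊗ₜ[k] ((X : Polynomial k) ^ r) := by
  rcases eq_or_ne r 0 with rfl | h
  · simp [val]
  · simp [val, h]

lemma val_0m (m : ℕ) : val n q 0 m = ((X : Polynomial k) ^ m) ⊗ₜ[k] (1 : Polynomial k) := by
  simp [val]

lemma val_11 : val n q 1 1 = TT n q := by simp [val]

lemma val_eq_zero {r m : ℕ} (hr : 1 ≤ r) (hm : 1 ≤ m) (hrm : 3 ≤ r + m) :
    val n q r m = 0 := by
  have h0 : r ≠ 0 := by omega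
  have h1 : m ≠ 0 := by omega
  have h2 : ¬ (r = 1 ∧ m = 1) := by omega
  simp [val, h0, h1, h2]

noncomputable def sMap : Polynomial k ⊗[k] Polynomial k →ₗ[k] Polynomial k ⊗[k] Polynomial k :=
  (b2 (k := k)).constr k fun p => val n q p.1 p.2

lemma sMap_apply (r m : ℕ) :
    sMap n q (((X : Polynomial k) ^ r) ⊗ₜ ((X : Polynomial k) ^ m)) = val n q r m := by
  rw [← b2_apply (r, m)]
  exact (b2 (k := k)).constr_basis k _ (r, m)


variable (hq : ∀ i j, i ≤ 1 ∨ j ≤ 1 → q i j = 0)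

lemma mulLeft_one' : mulLeft k (1 : Polynomial k) = LinearMap.id := by
  ext x; simp

lemma mulRight_one' : mulRight k (1 : Polynomial k) = LinearMap.id := by
  ext x; simp

include hq in
lemma existsA (p u v : ℕ) :
    sMap n q (((X : Polynomial k) ^ p) ⊗ₜ ((X : Polynomial k) ^ (u + v)))
      = psiMap (sMap n q) ((X : Polynomial k) ^ v) (val n q p u) := by
  rw [sMap_apply]
  rcases Nat.eq_zero_or_pos p with rfl | hp
  · rw [val_0m, val_0m, psiMap_tmul]
    rw [show (1 : Polynomial k) = X ^ 0 from (pow_zero X).symm, sMap_apply, val_0m]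
    simp [← pow_add]
  rcases Nat.eq_zero_or_pos u with rfl | hu
  · rw [val_r0, psiMap_tmul, mulLeft_one', rTensor_id, sMap_apply]
    simp
  rcases eq_or_lt_of_le (Nat.one_le_iff_ne_zero.2 hp.ne') with hp1 | hp2
  · -- p = 1
    rcases eq_or_lt_of_le (Nat.one_le_iff_ne_zero.2 hu.ne') with hu1 | hu2
    · -- u = 1
      rw [← hp1, ← hu1, val_11]
      rcases Nat.eq_zero_or_pos v with rfl | hv
      · rw [val_11]
        unfold TT
        rw [map_sum]
        refine Finset.sum_congr rfl fun i _ => ?_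
        rw [map_sum]
        refine Finset.sum_congr rfl fun j _ => ?_
        rw [map_smul, psiMap_tmul, sMap_apply, val_r0]
        simp
      · rw [val_eq_zero n q le_rfl (by omega) (by omega)]
        unfold TT
        rw [map_sum]
        refine (Finset.sum_eq_zero fun i _ => ?_).symm
        rw [map_sum]
        refine (Finset.sum_eq_zero fun j _ => ?_)
        rcases le_or_gt j 1 with hj | hj
        · rw [hq i j (Or.inr hj), zero_smul, map_zero]
        · rw [map_smul, psiMap_tmul, sMap_apply,
            val_eq_zero n q (by omega) hv (by omega)]
          simp
    · -- p = 1, u ≥ 2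
      rw [← hp1, val_eq_zero n q le_rfl (by omega) (by omega),
        val_eq_zero n q le_rfl hu (by omega), map_zero]
  · -- p ≥ 2
    rw [val_eq_zero n q (by omega) hu (by omega),
      val_eq_zero n q (by omega) (by omega) (by omega), map_zero]

include hq in
lemma existsB (p c u : ℕ) :
    sMap n q (((X : Polynomial k) ^ (p + c)) ⊗ₜ ((X : Polynomial k) ^ u))
      = thetaMap (sMap n q) ((X : Polynomial k) ^ p) (val n q c u) := by
  rw [sMap_apply]
  rcases Nat.eq_zero_or_pos c with rfl | hc
  · rw [val_0m, thetaMap_tmul, mulRight_one', lTensor_id, sMap_apply]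
    simp
  rcases Nat.eq_zero_or_pos u with rfl | hu
  · rw [val_r0, val_r0, thetaMap_tmul]
    rw [show (1 : Polynomial k) = X ^ 0 from (pow_zero X).symm, sMap_apply, val_r0]
    simp [← pow_add]
  rcases eq_or_lt_of_le (Nat.one_le_iff_ne_zero.2 hc.ne') with hc1 | hc2
  · -- c = 1
    rcases eq_or_lt_of_le (Nat.one_le_iff_ne_zero.2 hu.ne') with hu1 | hu2
    · -- u = 1
      rw [← hc1, ← hu1, val_11]
      rcases Nat.eq_zero_or_pos p with rfl | hp
      · rw [show (0:ℕ) + 1 = 1 from rfl, val_11]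
        unfold TT
        rw [map_sum]
        refine Finset.sum_congr rfl fun i _ => ?_
        rw [map_sum]
        refine Finset.sum_congr rfl fun j _ => ?_
        rw [map_smul, thetaMap_tmul, sMap_apply, val_0m]
        simp
      · rw [val_eq_zero n q (by omega) le_rfl (by omega)]
        unfold TT
        rw [map_sum]
        refine (Finset.sum_eq_zero fun i _ => ?_).symm
        rw [map_sum]
        refine (Finset.sum_eq_zero fun j _ => ?_)
        rcases le_or_gt i 1 with hi | hi
        · rw [hq i j (Or.inl hi), zero_smul, map_zero]
        · rcases eq_or_lt_of_le (Nat.one_le_iff_ne_zero.2 hp.ne') with hp1 | hp2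
          · rw [map_smul, thetaMap_tmul, sMap_apply, ← hp1,
              val_eq_zero n q le_rfl (by omega) (by omega)]
            simp
          · rw [map_smul, thetaMap_tmul, sMap_apply,
              val_eq_zero n q (by omega) (by omega) (by omega)]
            simp
    · -- c = 1, u ≥ 2
      rw [← hc1, val_eq_zero n q le_rfl (by omega) (by omega),
        val_eq_zero n q (by omega) hu (by omega), map_zero]
  · -- c ≥ 2
    rw [val_eq_zero n q (by omega) hu (by omega),
      val_eq_zero n q (by omega) hu (by omega), map_zero]


lemma lmap_ext2 {M : Type*} [AddCommMonoid M] [Module k M]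
    {f g : Polynomial k ⊗[k] Polynomial k →ₗ[k] M}
    (h : ∀ a b : ℕ, f ((X ^ a) ⊗ₜ (X ^ b)) = g ((X ^ a) ⊗ₜ (X ^ b))) : f = g :=
  (b2 (k := k)).ext fun p => by simpa [b2_apply] using h p.1 p.2

lemma lmap_ext3R {M : Type*} [AddCommMonoid M] [Module k M]
    {f g : Polynomial k ⊗[k] (Polynomial k ⊗[k] Polynomial k) →ₗ[k] M}
    (h : ∀ a b c : ℕ, f ((X ^ a) ⊗ₜ ((X ^ b) ⊗ₜ (X ^ c))) = g ((X ^ a) ⊗ₜ ((X ^ b) ⊗ₜ (X ^ c)))) :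
    f = g :=
  (Module.Basis.tensorProduct bm (b2 (k := k))).ext fun p => by
    simpa [Module.Basis.tensorProduct_apply', b2_apply, bm_apply] using h p.1 p.2.1 p.2.2

lemma lmap_ext3L {M : Type*} [AddCommMonoid M] [Module k M]
    {f g : (Polynomial k ⊗[k] Polynomial k) ⊗[k] Polynomial k →ₗ[k] M}
    (h : ∀ a b c : ℕ, f (((X ^ a) ⊗ₜ (X ^ b)) ⊗ₜ (X ^ c)) = g (((X ^ a) ⊗ₜ (X ^ b)) ⊗ₜ (X ^ c))) :
    f = g :=
  (Module.Basis.tensorProduct (b2 (k := k)) bm).ext fun p => by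
    simpa [Module.Basis.tensorProduct_apply', b2_apply, bm_apply] using h p.1.1 p.1.2 p.2

include hq in
lemma sMap_isTwisting :
    IsTwistingMap k (Polynomial k) (Polynomial k) (sMap n q) := by
  constructor
  · -- unit_left
    intro a
    have h : (sMap n q) ∘ₗ (TensorProduct.mk k (Polynomial k) (Polynomial k) 1)
        = (TensorProduct.mk k (Polynomial k) (Polynomial k)).flip 1 := by
      refine (bm (k := k)).ext fun m => ?_
      rw [bm_apply]
      simp only [LinearMap.comp_apply, TensorProduct.mk_apply, LinearMap.flip_apply]
      rw [show (1 : Polynomial k) = X ^ 0 from (pow_zero X).symm, sMap_apply, val_0m, pow_zero]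
    have := LinearMap.congr_fun h a
    simpa using this
  · -- unit_right
    intro b
    have h : (sMap n q) ∘ₗ (TensorProduct.mk k (Polynomial k) (Polynomial k)).flip 1
        = TensorProduct.mk k (Polynomial k) (Polynomial k) 1 := by
      refine (bm (k := k)).ext fun r => ?_
      rw [bm_apply]
      simp only [LinearMap.comp_apply, TensorProduct.mk_apply, LinearMap.flip_apply]
      rw [show (1 : Polynomial k) = X ^ 0 from (pow_zero X).symm, sMap_apply, val_r0, pow_zero]
    have := LinearMap.congr_fun h b
    simpa using this
  · -- mul_compat_B
    intro b b' a
    have h : (sMap n q) ∘ₗ (rTensor (Polynomial k) (mul' k (Polynomial k)))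
        = (lTensor (Polynomial k) (mul' k (Polynomial k))) ∘ₗ
            (TensorProduct.assoc k (Polynomial k) (Polynomial k) (Polynomial k)).toLinearMap ∘ₗ
            (rTensor (Polynomial k) (sMap n q)) ∘ₗ
            (TensorProduct.assoc k (Polynomial k) (Polynomial k) (Polynomial k)).symm.toLinearMap ∘ₗ
            (lTensor (Polynomial k) (sMap n q)) ∘ₗ
            (TensorProduct.assoc k (Polynomial k) (Polynomial k) (Polynomial k)).toLinearMap := by
      refine lmap_ext3L fun p c u => ?_
      simp only [LinearMap.comp_apply, LinearEquiv.coe_coe, rTensor_tmul, lTensor_tmul,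
        mul'_apply, TensorProduct.assoc_tmul, sMap_apply]
      rw [← pow_add, existsB n q hq p c u]
      simp only [thetaMap, LinearMap.comp_apply, TensorProduct.mk_apply, LinearEquiv.coe_coe]
    have := LinearMap.congr_fun h ((b ⊗ₜ b') ⊗ₜ a)
    simpa using this
  · -- mul_compat_A
    intro b a a'
    have h : (sMap n q) ∘ₗ (lTensor (Polynomial k) (mul' k (Polynomial k)))
        = (rTensor (Polynomial k) (mul' k (Polynomial k))) ∘ₗ
            (TensorProduct.assoc k (Polynomial k) (Polynomial k) (Polynomial k)).symm.toLinearMap ∘ₗ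
            (lTensor (Polynomial k) (sMap n q)) ∘ₗ
            (TensorProduct.assoc k (Polynomial k) (Polynomial k) (Polynomial k)).toLinearMap ∘ₗ
            (rTensor (Polynomial k) (sMap n q)) ∘ₗ
            (TensorProduct.assoc k (Polynomial k) (Polynomial k) (Polynomial k)).symm.toLinearMap := by
      refine lmap_ext3R fun p u v => ?_
      simp only [LinearMap.comp_apply, LinearEquiv.coe_coe, rTensor_tmul, lTensor_tmul,
        mul'_apply, TensorProduct.assoc_symm_tmul, sMap_apply]
      rw [← pow_add, existsA n q hq p u v]
      simp only [psiMap, LinearMap.comp_apply, TensorProduct.mk_apply, LinearMap.flip_apply,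
        LinearEquiv.coe_coe]
    have := LinearMap.congr_fun h (b ⊗ₜ (a ⊗ₜ a'))
    simpa using this

lemma rTensor_mulLeft_mem' {c : ℕ} {S₀ S : Set (ℕ × ℕ)}
    (h : ∀ p ∈ S₀, ((c + p.1, p.2) : ℕ × ℕ) ∈ S)
    {t : Polynomial k ⊗[k] Polynomial k} (ht : t ∈ Submodule.span k ((b2 (k := k)) '' S₀)) :
    rTensor (Polynomial k) (mulLeft k ((X : Polynomial k) ^ c)) t
      ∈ Submodule.span k ((b2 (k := k)) '' S) := by
  refine map_mem_span (fun p hp => ?_) ht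
  rw [b2_apply, rTensor_tmul, mulLeft_apply, ← pow_add]
  exact pow_mem_span (h p hp)

lemma lTensor_mulRight_mem' {c : ℕ} {S₀ S : Set (ℕ × ℕ)}
    (h : ∀ p ∈ S₀, ((p.1, p.2 + c) : ℕ × ℕ) ∈ S)
    {t : Polynomial k ⊗[k] Polynomial k} (ht : t ∈ Submodule.span k ((b2 (k := k)) '' S₀)) :
    lTensor (Polynomial k) (mulRight k ((X : Polynomial k) ^ c)) t
      ∈ Submodule.span k ((b2 (k := k)) '' S) := by
  refine map_mem_span (fun p hp => ?_) ht
  rw [b2_apply, lTensor_tmul, mulRight_apply, ← pow_add]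
  exact pow_mem_span (h p hp)

section Uniq

variable {s' : Polynomial k ⊗[k] Polynomial k →ₗ[k] Polynomial k ⊗[k] Polynomial k}
variable (hs' : IsTwistingMap k (Polynomial k) (Polynomial k) s')
variable (hT : s' ((X : Polynomial k) ⊗ₜ (X : Polynomial k)) = TT n q)

include hs' in
lemma ka (b : Polynomial k) (m : ℕ) :
    s' (b ⊗ₜ ((X : Polynomial k) ^ (m + 1)))
      = psiMap s' X (s' (b ⊗ₜ ((X : Polynomial k) ^ m))) := by
  have h := hs'.mul_compat_A b ((X : Polynomial k) ^ m) X
  rw [← pow_succ] at h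
  rw [h]
  simp only [psiMap, LinearMap.comp_apply, TensorProduct.mk_apply, LinearMap.flip_apply,
    LinearEquiv.coe_coe, TensorProduct.assoc_symm_tmul, rTensor_tmul]

include hs' in
lemma kb (a : Polynomial k) (r : ℕ) :
    s' (((X : Polynomial k) ^ (r + 1)) ⊗ₜ a)
      = thetaMap s' X (s' (((X : Polynomial k) ^ r) ⊗ₜ a)) := by
  have h := hs'.mul_compat_B X ((X : Polynomial k) ^ r) a
  rw [← pow_succ'] at h
  rw [h]
  simp only [thetaMap, LinearMap.comp_apply, TensorProduct.mk_apply, LinearEquiv.coe_coe,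
    TensorProduct.assoc_tmul, lTensor_tmul]

include hq in
lemma TT_mem_j : TT n q ∈ Submodule.span k ((b2 (k := k)) '' {p | 2 ≤ p.2}) := by
  refine Submodule.sum_mem _ fun i _ => Submodule.sum_mem _ fun j _ => ?_
  rcases le_or_gt j 1 with hj | hj
  · rw [hq i j (Or.inr hj), zero_smul]; exact Submodule.zero_mem _
  · exact Submodule.smul_mem _ _ (pow_mem_span (by simp; omega))

include hq in
lemma TT_mem_ij : TT n q ∈ Submodule.span k ((b2 (k := k)) '' {p | 2 ≤ p.1 ∧ 2 ≤ p.2}) := by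
  refine Submodule.sum_mem _ fun i _ => Submodule.sum_mem _ fun j _ => ?_
  rcases le_or_gt i 1 with hi | hi
  · rw [hq i j (Or.inl hi), zero_smul]; exact Submodule.zero_mem _
  rcases le_or_gt j 1 with hj | hj
  · rw [hq i j (Or.inr hj), zero_smul]; exact Submodule.zero_mem _
  · exact Submodule.smul_mem _ _ (pow_mem_span ⟨by omega, by omega⟩)

include hs' hT hq in
lemma jb : ∀ r, 1 ≤ r →
    s' (((X : Polynomial k) ^ r) ⊗ₜ (X : Polynomial k))
      ∈ Submodule.span k ((b2 (k := k)) '' {p | 2 ≤ p.2}) := by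
  intro r hr
  induction r with
  | zero => omega
  | succ r ih =>
    rcases Nat.eq_zero_or_pos r with rfl | hr'
    · rw [show ((X : Polynomial k) ^ (0 + 1)) = X from by norm_num, hT]
      exact TT_mem_j n q hq
    · rw [kb hs' X r]
      refine map_mem_span (fun p hp => ?_) (ih hr')
      rw [b2_apply, thetaMap_tmul]
      refine lTensor_mulRight_mem' (S₀ := Set.univ) (fun p' _ => ?_) (mem_span_univ _)
      have h2 : 2 ≤ p.2 := hp
      simp only [Set.mem_setOf_eq]
      omega

include hs' hT hq in
lemma ij1 : ∀ m, 1 ≤ m →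
    s' ((X : Polynomial k) ⊗ₜ ((X : Polynomial k) ^ m))
      ∈ Submodule.span k ((b2 (k := k)) '' {p | 2 ≤ p.1 ∧ 2 ≤ p.2}) := by
  intro m hm
  induction m with
  | zero => omega
  | succ m ih =>
    rcases Nat.eq_zero_or_pos m with rfl | hm'
    · rw [show ((X : Polynomial k) ^ (0 + 1)) = X from by norm_num, hT]
      exact TT_mem_ij n q hq
    · rw [ka hs' X m]
      refine map_mem_span (fun p hp => ?_) (ih hm')
      rw [b2_apply, psiMap_tmul]
      refine rTensor_mulLeft_mem' (S₀ := {p | 2 ≤ p.2}) (fun p' hp' => ?_)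
        (jb n q hq hs' hT p.2 (by exact hp.2.trans' (by norm_num)))
      have h1 : 2 ≤ p.1 := hp.1
      exact ⟨by omega, hp'⟩

include hs' hT hq in
lemma ij : ∀ r, 1 ≤ r → ∀ m, 1 ≤ m →
    s' (((X : Polynomial k) ^ r) ⊗ₜ ((X : Polynomial k) ^ m))
      ∈ Submodule.span k ((b2 (k := k)) '' {p | 2 ≤ p.1 ∧ 2 ≤ p.2}) := by
  intro r hr
  induction r with
  | zero => omega
  | succ r ih =>
    intro m hm
    rcases Nat.eq_zero_or_pos r with rfl | hr'
    · rw [show ((X : Polynomial k) ^ (0 + 1)) = X from by norm_num]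
      exact ij1 n q hq hs' hT m hm
    · rw [kb hs' ((X : Polynomial k) ^ m) r]
      refine map_mem_span (fun p hp => ?_) (ih hr' m hm)
      rw [b2_apply, thetaMap_tmul]
      refine lTensor_mulRight_mem' (S₀ := {p | 2 ≤ p.1 ∧ 2 ≤ p.2}) (fun p' hp' => ?_)
        (ij1 n q hq hs' hT p.1 (by exact hp.1.trans' (by norm_num)))
      have h2 : 2 ≤ p.2 := hp.2
      exact ⟨hp'.1, by omega⟩

include hs' hT hq in
lemma mainClaim : ∀ N r m, 1 ≤ r → 1 ≤ m → 3 ≤ r + m →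
    s' (((X : Polynomial k) ^ r) ⊗ₜ ((X : Polynomial k) ^ m))
      ∈ Submodule.span k ((b2 (k := k)) '' {p | N ≤ p.1 + p.2}) := by
  intro N
  induction N with
  | zero =>
    intro r m _ _ _
    have huniv : {p : ℕ × ℕ | 0 ≤ p.1 + p.2} = Set.univ := by ext p; simp
    rw [huniv]; exact mem_span_univ _
  | succ N ihN =>
    intro r m hr hm hrm
    obtain ⟨m', rfl⟩ : ∃ m', m = m' + 1 := ⟨m - 1, by omega⟩
    rcases Nat.eq_zero_or_pos m' with rfl | hm'
    · -- m = 1, so r ≥ 2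
      obtain ⟨r', rfl⟩ : ∃ r', r = r' + 1 := ⟨r - 1, by omega⟩
      rw [kb hs' ((X : Polynomial k) ^ (0 + 1)) r']
      refine map_mem_span (fun p hp => ?_)
        (ij n q hq hs' hT r' (by omega) (0 + 1) (by omega))
      rw [b2_apply, thetaMap_tmul]
      have hin : s' ((X : Polynomial k) ⊗ₜ ((X : Polynomial k) ^ p.1))
          ∈ Submodule.span k ((b2 (k := k)) '' {p | N ≤ p.1 + p.2}) := by
        have h0 := ihN 1 p.1 le_rfl (by exact hp.1.trans' (by norm_num)) (by
          have := hp.1; omega)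
        rwa [pow_one] at h0
      refine lTensor_mulRight_mem' (S₀ := {p | N ≤ p.1 + p.2}) (fun p' hp' => ?_) hin
      have h2 : 2 ≤ p.2 := hp.2
      simp only [Set.mem_setOf_eq] at hp' ⊢
      omega
    · -- m' ≥ 1
      rw [ka hs' ((X : Polynomial k) ^ r) m']
      refine map_mem_span (fun p hp => ?_) (ij n q hq hs' hT r hr m' hm')
      rw [b2_apply, psiMap_tmul]
      have hin : s' (((X : Polynomial k) ^ p.2) ⊗ₜ (X : Polynomial k))
          ∈ Submodule.span k ((b2 (k := k)) '' {p | N ≤ p.1 + p.2}) := by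
        have h0 := ihN p.2 1 (by exact hp.2.trans' (by norm_num)) le_rfl (by
          have := hp.2; omega)
        rwa [pow_one] at h0
      refine rTensor_mulLeft_mem' (S₀ := {p | N ≤ p.1 + p.2}) (fun p' hp' => ?_) hin
      have h1 : 2 ≤ p.1 := hp.1
      simp only [Set.mem_setOf_eq] at hp' ⊢
      omega

include hs' hT hq in
lemma s'_zero (r m : ℕ) (hr : 1 ≤ r) (hm : 1 ≤ m) (hrm : 3 ≤ r + m) :
    s' (((X : Polynomial k) ^ r) ⊗ₜ ((X : Polynomial k) ^ m)) = 0 :=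
  eq_zero_of_mem_all fun N => mainClaim n q hq hs' hT N r m hr hm hrm

include hs' hT hq in
lemma s'_eq : s' = sMap n q := by
  refine lmap_ext2 fun r m => ?_
  rw [sMap_apply]
  rcases Nat.eq_zero_or_pos r with rfl | hr
  · rw [val_0m, pow_zero]
    exact hs'.unit_left _
  rcases Nat.eq_zero_or_pos m with rfl | hm
  · rw [val_r0, pow_zero]
    exact hs'.unit_right _
  rcases Nat.lt_or_ge (r + m) 3 with h3 | h3
  · have hr1 : r = 1 := by omega
    have hm1 : m = 1 := by omega
    subst hr1; subst hm1
    rw [val_11]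
    simpa [pow_one] using hT
  · rw [val_eq_zero n q hr hm h3]
    exact s'_zero n q hq hs' hT r m hr hm h3

end Uniq

end Stmt13Aux

open Polynomial in
theorem stmt13 (k : Type*) [CommRing k] (n : ℕ) (q : ℕ → ℕ → k)
    (hq : ∀ i j, i ≤ 1 ∨ j ≤ 1 → q i j = 0)
    (hqsupp : ∀ i j, n ≤ i ∨ n ≤ j → q i j = 0) :
    ∃ s : Polynomial k ⊗[k] Polynomial k →ₗ[k] Polynomial k ⊗[k] Polynomial k,
      (IsTwistingMap k (Polynomial k) (Polynomial k) s ∧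
        s ((X : Polynomial k) ⊗ₜ (X : Polynomial k)) =
          ∑ i ∈ Finset.range n, ∑ j ∈ Finset.range n,
            q i j • (((X : Polynomial k) ^ i) ⊗ₜ ((X : Polynomial k) ^ j))) ∧
      (∀ s' : Polynomial k ⊗[k] Polynomial k →ₗ[k] Polynomial k ⊗[k] Polynomial k,
        IsTwistingMap k (Polynomial k) (Polynomial k) s' →
        s' ((X : Polynomial k) ⊗ₜ (X : Polynomial k)) =
          ∑ i ∈ Finset.range n, ∑ j ∈ Finset.range n,
            q i j • (((X : Polynomial k) ^ i) ⊗ₜ ((X : Polynomial k) ^ j)) →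
        s' = s) ∧
      (∀ r m : ℕ, 0 < r → 0 < m → 2 < r + m →
        s (((X : Polynomial k) ^ r) ⊗ₜ ((X : Polynomial k) ^ m)) = 0) := by
  refine ⟨Stmt13Aux.sMap n q, ⟨Stmt13Aux.sMap_isTwisting n q hq, ?_⟩, ?_, ?_⟩
  · have h := Stmt13Aux.sMap_apply (k := k) n q 1 1
    rw [pow_one] at h
    rw [h, Stmt13Aux.val_11]
    rfl
  · intro s' h1 h2
    refine Stmt13Aux.s'_eq n q hq h1 ?_
    rw [h2]; rfl
  · intro r m hr hm hrm
    rw [Stmt13Aux.sMap_apply, Stmt13Aux.val_eq_zero n q (by omega) (by omega) (by omega)]
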